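/- Let p : X → Y be a weak p-morphism between finite posets. Then (i) for every x ∈ X, the image of max ↑x under p equals max ↑p(x), and (ii) p maps max X into max Y. -/
import Mathlib


/-- The set of maximal elements of the subposet `S`. -/
def maxSet {X : Type*} [PartialOrder X] (S : Set X) : Set X :=
  {x | x ∈ S ∧ ∀ y ∈ S, x ≤ y → y = x}

/-- A weak p-morphism: an order preserving map such that for all `x` and all maximal `y`
above `p x` there is a maximal element `z` of `↑x` with `p z = y`. -/
def IsWeakPMorphism {X Y : Type*} [PartialOrder X] [PartialOrder Y] (p : X → Y) : Prop :=
  Monotone p ∧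
    ∀ x : X, ∀ y ∈ maxSet (Set.univ : Set Y), p x ≤ y →
      ∃ z ∈ maxSet (Set.Ici x), p z = y

/-- For a weak p-morphism `p : X → Y` between finite posets: (i) the image of the set of
maximal elements of `↑x` is the set of maximal elements of `↑(p x)`; (ii) `p` maps maximal
elements of `X` to maximal elements of `Y`. -/
theorem weakPMorphism_image_maxSet
    {X Y : Type*} [PartialOrder X] [PartialOrder Y] [Finite X] [Finite Y]
    (p : X → Y) (hp : IsWeakPMorphism p) :
    (∀ x : X, p '' maxSet (Set.Ici x) = maxSet (Set.Ici (p x))) ∧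
    p '' maxSet (Set.univ : Set X) ⊆ maxSet (Set.univ : Set Y) := by
  obtain ⟨hmono, hpm⟩ := hp
  -- key: for z maximal in ↑x, p z is maximal in Y
  have key : ∀ x z : X, z ∈ maxSet (Set.Ici x) → p z ∈ maxSet (Set.univ : Set Y) := by
    intro x z hz
    obtain ⟨y, hy, hymax⟩ := Finite.exists_le_maximal (p := fun u : Y => True) (a := p z) trivial
    have hymem : y ∈ maxSet (Set.univ : Set Y) := by
      refine ⟨Set.mem_univ _, fun u _ hu => le_antisymm (hymax.2 trivial hu) hu⟩
    obtain ⟨w, hw, hpw⟩ := hpm z y hymem hy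
    have hwz : w = z := hz.2 w (le_trans hz.1 hw.1) hw.1
    rw [hwz] at hpw
    rw [hpw]; exact hymem
  have main : ∀ x : X, p '' maxSet (Set.Ici x) = maxSet (Set.Ici (p x)) := by
    intro x
    ext y
    constructor
    · rintro ⟨z, hz, rfl⟩
      have hmax := key x z hz
      exact ⟨hmono hz.1, fun u _ hu => hmax.2 u (Set.mem_univ u) hu⟩
    · rintro ⟨hy1, hy2⟩
      have hymem : y ∈ maxSet (Set.univ : Set Y) := by
        refine ⟨Set.mem_univ _, fun u _ hu => hy2 u (le_trans hy1 hu) hu⟩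
      obtain ⟨z, hz, hpz⟩ := hpm x y hymem hy1
      exact ⟨z, hz, hpz⟩
  refine ⟨main, ?_⟩
  rintro y ⟨x, hx, rfl⟩
  have hx' : x ∈ maxSet (Set.Ici x) :=
    ⟨le_refl x, fun u hu hle => hx.2 u (Set.mem_univ u) hle⟩
  exact key x x hx'
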